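/- Let $p_1, \ldots, p_k$ be distinct primes, $s_i \geq 1$, and $f_i \in \mathbb{Z}[x]$ monic of degree $n$ for each $i$. Then the product ideal $\prod_{i=1}^k (p_i^{s_i}, f_i(x))$ in $\mathbb{Z}[x]$ equals $(m, f(x))$, where $m = \prod_i p_i^{s_i}$ and $f \in \mathbb{Z}[x]$ is any monic polynomial of degree $n$ with $f \equiv f_i \pmod{p_i^{s_i}}$ for each $i$. -/

import Mathlib

open Ideal Polynomial

lemma sup_mul_sup_of_coprime {R : Type*} [CommRing R] (I J K : Ideal R)
    (h : I ⊔ J = ⊤) : (I ⊔ K) * (J ⊔ K) = I * J ⊔ K := by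
  apply le_antisymm
  · rw [Ideal.sup_mul, Ideal.mul_sup, Ideal.mul_sup]
    refine sup_le (sup_le le_sup_left ?_) (sup_le ?_ ?_)
    · exact le_trans Ideal.mul_le_right le_sup_right
    · exact le_trans Ideal.mul_le_left le_sup_right
    · exact le_trans Ideal.mul_le_right le_sup_right
  · refine sup_le (Ideal.mul_mono le_sup_left le_sup_left) ?_
    have hK : K = I * K ⊔ J * K := by rw [← Ideal.sup_mul, h, Ideal.top_mul]
    refine le_trans (le_of_eq hK) (sup_le (Ideal.mul_mono le_sup_left le_sup_right) ?_)
    rw [mul_comm J K]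
    exact Ideal.mul_mono le_sup_right le_sup_left

lemma prod_span_sup {R : Type*} [CommRing R] {ι : Type*} (t : Finset ι) (a : ι → R)
    (hcop : ∀ i ∈ t, ∀ j ∈ t, i ≠ j → IsCoprime (a i) (a j)) (F : Ideal R) :
    ∏ i ∈ t, (Ideal.span {a i} ⊔ F) = Ideal.span {∏ i ∈ t, a i} ⊔ F := by
  classical
  induction t using Finset.induction_on with
  | empty => simp
  | @insert i t hi ih =>
    rw [Finset.prod_insert hi, Finset.prod_insert hi,
      ih (fun x hx y hy hxy => hcop x (Finset.mem_insert_of_mem hx)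
        y (Finset.mem_insert_of_mem hy) hxy),
      sup_mul_sup_of_coprime, Ideal.span_singleton_mul_span_singleton]
    rw [← Ideal.isCoprime_iff_sup_eq, Ideal.isCoprime_span_singleton_iff]
    exact IsCoprime.prod_right fun j hj =>
      hcop i (Finset.mem_insert_self i t) j (Finset.mem_insert_of_mem hj)
        (fun h => hi (h ▸ hj))

lemma sup_span_congr {R : Type*} [CommRing R] (J : Ideal R) (x y : R)
    (h : x - y ∈ J) : J ⊔ Ideal.span {x} = J ⊔ Ideal.span {y} := by
  apply le_antisymm <;> refine sup_le le_sup_left ?_ <;>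
    rw [Ideal.span_le, Set.singleton_subset_iff]
  · have : x = (x - y) + y := by ring
    rw [this]
    exact Ideal.add_mem _ (le_sup_left (α := Ideal R) h)
      (le_sup_right (α := Ideal R) (Ideal.subset_span rfl))
  · have : y = -(x - y) + x := by ring
    rw [this]
    exact Ideal.add_mem _ (le_sup_left (α := Ideal R) (neg_mem h))
      (le_sup_right (α := Ideal R) (Ideal.subset_span rfl))

theorem stmt_16 (k : ℕ) (hk : 0 < k) (p : Fin k → ℕ) (hp : ∀ i, (p i).Prime)
    (hdist : Function.Injective p) (s : Fin k → ℕ) (hs : ∀ i, 1 ≤ s i)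
    (n : ℕ) (hn : 0 < n) (m : ℕ) (hm : m = ∏ i : Fin k, p i ^ s i)
    (fi : Fin k → Polynomial ℤ) (hfi : ∀ i, (fi i).Monic ∧ (fi i).natDegree = n)
    (f : Polynomial ℤ) (hf : f.Monic) (hdeg : f.natDegree = n)
    (hcong : ∀ i, f - fi i ∈ Ideal.span {Polynomial.C ((p i : ℤ) ^ s i)}) :
    ∏ i : Fin k, Ideal.span {Polynomial.C ((p i : ℤ) ^ s i), fi i} =
      Ideal.span {Polynomial.C (m : ℤ), f} := by
  have key : ∀ i, Ideal.span {Polynomial.C ((p i : ℤ) ^ s i), fi i} =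
      Ideal.span {Polynomial.C ((p i : ℤ) ^ s i)} ⊔ Ideal.span {f} := by
    intro i
    rw [Ideal.span_insert, sup_span_congr _ (fi i) f]
    have : fi i - f = -(f - fi i) := by ring
    rw [this]
    exact neg_mem (hcong i)
  calc ∏ i : Fin k, Ideal.span {Polynomial.C ((p i : ℤ) ^ s i), fi i}
      = ∏ i : Fin k, (Ideal.span {Polynomial.C ((p i : ℤ) ^ s i)} ⊔ Ideal.span {f}) := by
        exact Finset.prod_congr rfl fun i _ => key i
    _ = Ideal.span {∏ i : Fin k, Polynomial.C ((p i : ℤ) ^ s i)} ⊔ Ideal.span {f} := by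
        apply prod_span_sup
        intro i _ j _ hij
        apply IsCoprime.map _ (Polynomial.C : ℤ →+* Polynomial ℤ)
        have h1 : Nat.Coprime (p i ^ s i) (p j ^ s j) :=
          ((Nat.coprime_primes (hp i) (hp j)).mpr (fun h => hij (hdist h))).pow _ _
        have h2 : IsCoprime ((p i ^ s i : ℕ) : ℤ) ((p j ^ s j : ℕ) : ℤ) :=
          Nat.isCoprime_iff_coprime.mpr h1
        push_cast at h2
        exact h2
    _ = Ideal.span {Polynomial.C (m : ℤ)} ⊔ Ideal.span {f} := by
        rw [← map_prod]
        congr 2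
        rw [hm]
        push_cast
        ring
    _ = Ideal.span {Polynomial.C (m : ℤ), f} := (Ideal.span_insert _ _).symm
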